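/- The derived subalgebra of K_k equals K_{2k+1}, where K_k = {x ∈ Witt : φ_0(x) = φ_1(x) = ⋯ = φ_k(x) = 0} and φ_j(L_n) = i(in)^j (with φ_0(L_n) = i). -/

import Mathlib

set_option linter.unusedSectionVars false

open Polynomial Finset

namespace Stmt15Aux

/-- scalar iterated difference -/
def dd (g : ℤ → ℂ) : ℕ → ℤ → ℂ
  | 0 => g
  | (r+1) => fun n => dd g r n - dd g r (n+1)

lemma dd_shift (g : ℤ → ℂ) : ∀ (r : ℕ) (n : ℤ),
    dd (fun m => g m - g (m+1)) r n = dd g (r+1) n := by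
  intro r
  induction r with
  | zero => intro n; rfl
  | succ r IH => intro n; simp only [dd, IH]

lemma dd_poly : ∀ (r : ℕ) (P : ℂ[X]), P.degree < (r : ℕ) → ∀ n : ℤ,
    dd (fun m => P.eval (m : ℂ)) r n = 0 := by
  intro r
  induction r with
  | zero =>
    intro P hP n
    have hP0 : P = 0 := by
      by_contra h
      exact Nat.not_lt_zero _ ((Polynomial.natDegree_lt_iff_degree_lt h).mpr hP)
    simp [dd, hP0]
  | succ r IH =>
    intro P hP n
    set Q : ℂ[X] := P - P.comp (X + C 1) with hQ
    have hQdeg : Q.degree < (r : ℕ) := by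
      by_cases hP0 : P = 0
      · simp only [hQ, hP0, zero_comp, sub_zero]
        exact lt_of_eq_of_lt Polynomial.degree_zero (WithBot.bot_lt_coe r)
      · have hq1 : (X + C (1:ℂ)).natDegree = 1 := by
          exact Polynomial.natDegree_X_add_C 1
        have hlc : (P.comp (X + C 1)).leadingCoeff = P.leadingCoeff := by
          rw [Polynomial.leadingCoeff_comp (by rw [hq1]; exact one_ne_zero)]
          have : (X + C (1:ℂ)).leadingCoeff = 1 := (monic_X_add_C 1).leadingCoeff
          rw [this, one_pow, mul_one]
        have hcomp_ne : P.comp (X + C 1) ≠ 0 := by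
          intro h
          apply hP0
          have := hlc
          rw [h, Polynomial.leadingCoeff_zero] at this
          exact Polynomial.leadingCoeff_eq_zero.mp this.symm
        have hnd : (P.comp (X + C 1)).natDegree = P.natDegree := by
          rw [Polynomial.natDegree_comp, hq1, mul_one]
        have hde : P.degree = (P.comp (X + C 1)).degree := by
          rw [Polynomial.degree_eq_natDegree hP0, Polynomial.degree_eq_natDegree hcomp_ne, hnd]
        have hsub := Polynomial.degree_sub_lt hde hP0 hlc.symm
        -- degree Q < degree P, degree P < r+1
        have hPle : P.natDegree ≤ r := by
          have := (Polynomial.natDegree_lt_iff_degree_lt hP0).mpr hP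
          omega
        calc Q.degree < P.degree := hsub
          _ = (P.natDegree : WithBot ℕ) := Polynomial.degree_eq_natDegree hP0
          _ ≤ (r : WithBot ℕ) := by exact_mod_cast hPle
    have heval : (fun m : ℤ => P.eval (m:ℂ) - P.eval ((m+1 : ℤ):ℂ))
        = fun m : ℤ => Q.eval (m:ℂ) := by
      funext m
      simp only [hQ, Polynomial.eval_sub, Polynomial.eval_comp, Polynomial.eval_add,
        Polynomial.eval_X, Polynomial.eval_C]
      push_cast
      ring
    rw [← dd_shift]
    calc dd (fun m => P.eval (m:ℂ) - P.eval ((m+1:ℤ):ℂ)) r n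
        = dd (fun m => Q.eval (m:ℂ)) r n := by rw [heval]
      _ = 0 := IH Q hQdeg n

end Stmt15Aux
namespace Stmt15Aux

variable {W : Type} [LieRing W] [LieAlgebra ℂ W]

/-- iterated difference of the basis family -/
def Mo (L : ℤ → W) : ℕ → ℤ → W
  | 0 => L
  | (r+1) => fun n => Mo L r n - Mo L r (n+1)

section main

variable (L : ℤ → W) (φ : ℕ → (W →ₗ[ℂ] ℂ)) (b : Module.Basis ℤ ℂ W)
variable (hL : ∀ m n : ℤ, ⁅L m, L n⁆ = ((m : ℂ) - n) • L (m + n))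
variable (hφ : ∀ (j : ℕ) (n : ℤ), φ j (L n) = Complex.I * (Complex.I * n) ^ j)
variable (hb : ∀ n : ℤ, b n = L n)

include hφ in
lemma phi_L (p : ℕ) (n : ℤ) : φ p (L n) = Complex.I ^ (p+1) * (n:ℂ) ^ p := by
  rw [hφ, mul_pow]; ring

include hφ in
lemma phi_Mo (p : ℕ) : ∀ (r : ℕ) (n : ℤ),
    φ p (Mo L r n) = dd (fun m => φ p (L m)) r n := by
  intro r
  induction r with
  | zero => intro n; rfl
  | succ r IH => intro n; simp only [Mo, dd, map_sub, IH]

include hφ in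
lemma phi_Mo_zero {p r : ℕ} (hpr : p < r) (n : ℤ) : φ p (Mo L r n) = 0 := by
  rw [phi_Mo L φ hφ]
  have hfun : (fun m : ℤ => φ p (L m))
      = fun m : ℤ => (C (Complex.I ^ (p+1)) * X ^ p : ℂ[X]).eval (m:ℂ) := by
    funext m
    rw [phi_L L φ hφ]
    simp
  rw [hfun]
  refine dd_poly r _ (lt_of_le_of_lt (Polynomial.degree_C_mul_X_pow_le _ _) ?_) n
  exact_mod_cast hpr

include hL in
lemma bracket_Mo : ∀ (r : ℕ) (a c : ℤ),
    ⁅Mo L r a, Mo L r c⁆ = ((a:ℂ) - c) • Mo L (2*r) (a + c) := by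
  intro r
  induction r with
  | zero => intro a c; simpa [Mo] using hL a c
  | succ r IH =>
    intro a c
    have h2 : 2 * (r+1) = (2*r) + 1 + 1 := by ring
    rw [h2]
    simp only [Mo, lie_sub, sub_lie, IH]
    have e1 : a + (c+1) = a + c + 1 := by ring
    have e2 : (a+1) + c = a + c + 1 := by ring
    have e3 : (a+1) + (c+1) = a + c + 1 + 1 := by ring
    rw [e1, e2, e3]
    push_cast
    module

include hb in
lemma Mo_repr_low : ∀ (r : ℕ) (n m : ℤ), m < n → b.repr (Mo L r n) m = 0 := by
  intro r
  induction r with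
  | zero =>
    intro n m h
    rw [show Mo L 0 n = L n from rfl, ← hb, b.repr_self]
    exact Finsupp.single_eq_of_ne' (by omega)
  | succ r IH =>
    intro n m h
    simp only [Mo, map_sub, Finsupp.coe_sub, Pi.sub_apply,
      IH n m h, IH (n+1) m (by omega), sub_zero]

include hb in
lemma Mo_repr_high : ∀ (r : ℕ) (n m : ℤ), n + r < m → b.repr (Mo L r n) m = 0 := by
  intro r
  induction r with
  | zero =>
    intro n m h
    rw [show Mo L 0 n = L n from rfl, ← hb, b.repr_self]
    exact Finsupp.single_eq_of_ne' (by omega)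
  | succ r IH =>
    intro n m h
    have h' : (n + 1) + (r:ℤ) < m := by push_cast at h ⊢; omega
    have h'' : n + (r:ℤ) < m := by push_cast at h ⊢; omega
    simp only [Mo, map_sub, Finsupp.coe_sub, Pi.sub_apply,
      IH n m h'', IH (n+1) m h', sub_zero]

include hb in
lemma Mo_repr_diag : ∀ (r : ℕ) (n : ℤ), b.repr (Mo L r n) n = 1 := by
  intro r
  induction r with
  | zero =>
    intro n
    rw [show Mo L 0 n = L n from rfl, ← hb, b.repr_self]
    exact Finsupp.single_eq_same
  | succ r IH =>
    intro n
    simp only [Mo, map_sub, Finsupp.coe_sub, Pi.sub_apply, IH n,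
      Mo_repr_low L b hb r (n+1) n (by omega), sub_zero]

include hφ in
lemma phi_sum (s : Finset ℤ) (c : ℤ → ℂ) (q : ℕ) :
    φ q (∑ m ∈ s, c m • L m) = Complex.I ^ (q+1) * ∑ m ∈ s, c m * (m:ℂ) ^ q := by
  rw [map_sum, Finset.mul_sum]
  refine Finset.sum_congr rfl fun m _ => ?_
  rw [map_smul, hφ, smul_eq_mul, mul_pow]
  ring

include hb in
lemma repr_expand (x : W) : ∑ m ∈ (b.repr x).support, (b.repr x) m • L m = x := by
  conv_rhs => rw [← b.linearCombination_repr x]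
  rw [Finsupp.linearCombination_apply, Finsupp.sum]
  exact Finset.sum_congr rfl fun m _ => by rw [hb]

include hφ hb in
lemma moment_zero (q : ℕ) (x : W) (hx : φ q x = 0) :
    ∑ m ∈ (b.repr x).support, (b.repr x) m * (m:ℂ) ^ q = 0 := by
  have h := phi_sum L φ hφ (b.repr x).support (fun m => b.repr x m) q
  rw [repr_expand L b hb x, hx] at h
  exact ((mul_eq_zero.mp h.symm).resolve_left (pow_ne_zero _ Complex.I_ne_zero))

end main
end Stmt15Aux
namespace Stmt15Aux
section main2

variable {W : Type} [LieRing W] [LieAlgebra ℂ W]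
variable (L : ℤ → W) (φ : ℕ → (W →ₗ[ℂ] ℂ)) (b : Module.Basis ℤ ℂ W)
variable (hL : ∀ m n : ℤ, ⁅L m, L n⁆ = ((m : ℂ) - n) • L (m + n))
variable (hφ : ∀ (j : ℕ) (n : ℤ), φ j (L n) = Complex.I * (Complex.I * n) ^ j)
variable (hb : ∀ n : ℤ, b n = L n)

/-- purely scalar combinatorial kernel of the ⊆ direction -/
lemma scalar_key (k p : ℕ) (hp : p ≤ 2*k+1) (A B : ℕ → ℂ)
    (hA : ∀ q ≤ k, A q = 0) (hB : ∀ q ≤ k, B q = 0) :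
    ∑ a ∈ Finset.range (p+1),
      (p.choose a : ℂ) * (A (a+1) * B (p-a) - A a * B (p-a+1)) = 0 := by
  by_cases hp2 : p = 2*k+1
  · subst hp2
    set X : ℂ := A (k+1) * B (k+1) with hX
    have hsum : ∀ a ∈ Finset.range (2*k+1+1),
        ((2*k+1).choose a : ℂ) * (A (a+1) * B (2*k+1-a) - A a * B (2*k+1-a+1))
        = (if a = k then ((2*k+1).choose k : ℂ) * X else 0)
          - (if a = k+1 then ((2*k+1).choose (k+1) : ℂ) * X else 0) := by
      intro a ha
      rw [Finset.mem_range] at ha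
      by_cases h1 : a = k
      · rw [h1, if_pos rfl, if_neg (by omega), hA k le_rfl,
          show 2*k+1-k = k+1 from by omega, hX]
        ring
      · by_cases h2 : a = k+1
        · rw [h2, if_neg (by omega), if_pos rfl, hB (2*k+1-(k+1)) (by omega),
            show 2*k+1-(k+1)+1 = k+1 from by omega, hX]
          ring
        · rw [if_neg h1, if_neg h2]
          have hT1 : A (a+1) * B (2*k+1-a) = 0 := by
            rcases lt_or_gt_of_ne h1 with h | h
            · rw [hA (a+1) (by omega), zero_mul]
            · rw [hB (2*k+1-a) (by omega), mul_zero]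
          have hT2 : A a * B (2*k+1-a+1) = 0 := by
            rcases Nat.lt_or_ge a (k+1) with h | h
            · rw [hA a (by omega), zero_mul]
            · rw [hB (2*k+1-a+1) (by omega), mul_zero]
          rw [hT1, hT2]
          ring
    rw [Finset.sum_congr rfl hsum, Finset.sum_sub_distrib,
      Finset.sum_ite_eq' _ k, Finset.sum_ite_eq' _ (k+1),
      if_pos (by simp [Finset.mem_range]; omega), if_pos (by simp [Finset.mem_range]; omega)]
    have hch : (2*k+1).choose (k+1) = (2*k+1).choose k := by
      rw [show k+1 = 2*k+1-k from by omega]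
      exact Nat.choose_symm (by omega)
    rw [hch, sub_self]
  · have hp' : p < 2*k+1 := lt_of_le_of_ne hp hp2
    refine Finset.sum_eq_zero fun a ha => ?_
    rw [Finset.mem_range] at ha
    have hT1 : A (a+1) * B (p-a) = 0 := by
      rcases Nat.lt_or_ge (a+1) (k+1) with h | h
      · rw [hA (a+1) (by omega), zero_mul]
      · rw [hB (p-a) (by omega), mul_zero]
    have hT2 : A a * B (p-a+1) = 0 := by
      rcases Nat.lt_or_ge a (k+1) with h | h
      · rw [hA a (by omega), zero_mul]
      · rw [hB (p-a+1) (by omega), mul_zero]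
    rw [hT1, hT2]
    ring

lemma lie_fsum {ι : Type*} (x : W) (s : Finset ι) (f : ι → W) :
    ⁅x, ∑ i ∈ s, f i⁆ = ∑ i ∈ s, ⁅x, f i⁆ := by
  classical
  induction s using Finset.induction_on with
  | empty => simp
  | insert _ _ h IH => rw [Finset.sum_insert h, Finset.sum_insert h, lie_add, IH]

lemma fsum_lie {ι : Type*} (s : Finset ι) (f : ι → W) (y : W) :
    ⁅∑ i ∈ s, f i, y⁆ = ∑ i ∈ s, ⁅f i, y⁆ := by
  classical
  induction s using Finset.induction_on with
  | empty => simp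
  | insert _ _ h IH => rw [Finset.sum_insert h, Finset.sum_insert h, add_lie, IH]

include hL hφ hb in
lemma bracket_phi_zero (k : ℕ) (x y : W)
    (hx : ∀ p ≤ k, φ p x = 0) (hy : ∀ p ≤ k, φ p y = 0)
    (p : ℕ) (hp : p ≤ 2*k+1) : φ p ⁅x, y⁆ = 0 := by
  classical
  set c := b.repr x with hc
  set d := b.repr y with hd
  set s := c.support with hs
  set t := d.support with ht
  set A : ℕ → ℂ := fun q => ∑ m ∈ s, c m * (m:ℂ) ^ q with hA
  set B : ℕ → ℂ := fun q => ∑ n ∈ t, d n * (n:ℂ) ^ q with hB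
  have hAz : ∀ q ≤ k, A q = 0 := fun q hq => moment_zero L φ b hφ hb q x (hx q hq)
  have hBz : ∀ q ≤ k, B q = 0 := fun q hq => moment_zero L φ b hφ hb q y (hy q hq)
  have hxy : ⁅x, y⁆ = ∑ m ∈ s, ∑ n ∈ t, (c m * (d n * ((m:ℂ) - n))) • L (m + n) := by
    conv_lhs => rw [← repr_expand L b hb x, ← repr_expand L b hb y]
    rw [fsum_lie]
    refine Finset.sum_congr rfl fun m _ => ?_
    rw [lie_fsum]
    refine Finset.sum_congr rfl fun n _ => ?_
    rw [smul_lie, lie_smul, hL, smul_smul, smul_smul, mul_assoc]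
  rw [hxy, map_sum]
  have hterm : ∀ m ∈ s, (φ p) (∑ n ∈ t, (c m * (d n * ((m:ℂ) - n))) • L (m + n))
      = ∑ n ∈ t, (c m * d n) * (((m:ℂ) - n) * (Complex.I ^ (p+1) * ((m:ℂ) + n) ^ p)) := by
    intro m _
    rw [map_sum]
    refine Finset.sum_congr rfl fun n _ => ?_
    rw [map_smul, smul_eq_mul, phi_L L φ hφ]
    push_cast
    ring
  rw [Finset.sum_congr rfl hterm]
  -- pull out I^(p+1)
  have hfac : ∑ m ∈ s, ∑ n ∈ t, (c m * d n) * (((m:ℂ) - n) * (Complex.I ^ (p+1) * ((m:ℂ) + n) ^ p))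
      = Complex.I ^ (p+1) * ∑ m ∈ s, ∑ n ∈ t, (c m * d n) * (((m:ℂ) - n) * ((m:ℂ) + n) ^ p) := by
    rw [Finset.mul_sum]
    refine Finset.sum_congr rfl fun m _ => ?_
    rw [Finset.mul_sum]
    exact Finset.sum_congr rfl fun n _ => by ring
  rw [hfac]
  -- the double sum equals the combinatorial sum
  have hmain : ∑ m ∈ s, ∑ n ∈ t, (c m * d n) * (((m:ℂ) - n) * ((m:ℂ) + n) ^ p)
      = ∑ a ∈ Finset.range (p+1),
          (p.choose a : ℂ) * (A (a+1) * B (p-a) - A a * B (p-a+1)) := by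
    have h1 : ∀ m ∈ s, ∑ n ∈ t, (c m * d n) * (((m:ℂ) - n) * ((m:ℂ) + n) ^ p)
        = ∑ n ∈ t, ∑ a ∈ Finset.range (p+1),
            (p.choose a : ℂ) * ((c m * (m:ℂ) ^ (a+1)) * (d n * (n:ℂ) ^ (p-a))
              - (c m * (m:ℂ) ^ a) * (d n * (n:ℂ) ^ (p-a+1))) := by
      intro m _
      refine Finset.sum_congr rfl fun n _ => ?_
      rw [add_pow, Finset.mul_sum, Finset.mul_sum]
      exact Finset.sum_congr rfl fun a ha => by ring
    rw [Finset.sum_congr rfl h1]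
    rw [Finset.sum_congr rfl (fun m (_ : m ∈ s) => Finset.sum_comm (s := t)
      (t := Finset.range (p+1)) (f := fun n a =>
        (p.choose a : ℂ) * ((c m * (m:ℂ) ^ (a+1)) * (d n * (n:ℂ) ^ (p-a))
              - (c m * (m:ℂ) ^ a) * (d n * (n:ℂ) ^ (p-a+1)))))]
    rw [Finset.sum_comm (s := s) (t := Finset.range (p+1))]
    refine Finset.sum_congr rfl fun a _ => ?_
    have e1 : A (a+1) * B (p-a) = ∑ m ∈ s, ∑ n ∈ t,
        (c m * (m:ℂ) ^ (a+1)) * (d n * (n:ℂ) ^ (p-a)) := by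
      rw [hA, hB]; rw [Finset.sum_mul_sum]
    have e2 : A a * B (p-a+1) = ∑ m ∈ s, ∑ n ∈ t,
        (c m * (m:ℂ) ^ a) * (d n * (n:ℂ) ^ (p-a+1)) := by
      rw [hA, hB]; rw [Finset.sum_mul_sum]
    rw [e1, e2, ← Finset.sum_sub_distrib, Finset.mul_sum]
    refine Finset.sum_congr rfl fun m _ => ?_
    rw [← Finset.sum_sub_distrib, Finset.mul_sum]
  rw [hmain, scalar_key k p hp A B hAz hBz, mul_zero]

end main2
end Stmt15Aux
namespace Stmt15Aux
section main3

variable {W : Type} [LieRing W] [LieAlgebra ℂ W]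
variable (L : ℤ → W) (φ : ℕ → (W →ₗ[ℂ] ℂ)) (b : Module.Basis ℤ ℂ W)
variable (hφ : ∀ (j : ℕ) (n : ℤ), φ j (L n) = Complex.I * (Complex.I * n) ^ j)
variable (hb : ∀ n : ℤ, b n = L n)

include hφ hb in
/-- vanishing of all moments up to `j` on a window of size ≤ `j+1` forces `x = 0`
    (Lagrange interpolation / Vandermonde) -/
lemma small_window_zero (j : ℕ) (x : W) (hmom : ∀ p ≤ j, φ p x = 0)
    (hcard : (b.repr x).support.card ≤ j + 1) : x = 0 := by
  classical
  set c := b.repr x with hc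
  have hc0 : c = 0 := by
    ext n0
    by_cases hn0 : n0 ∈ c.support
    · set v : ℤ → ℂ := fun m => (m : ℂ) with hv
      have hinj : Set.InjOn v c.support := fun a _ b _ h => Int.cast_injective h
      set P := Lagrange.interpolate c.support v (fun m => if m = n0 then (1:ℂ) else 0) with hP
      have hdegP : P.natDegree ≤ j := by
        by_cases h0 : P = 0
        · simp [h0]
        · have h1 := Lagrange.degree_interpolate_lt
            (r := fun m => if m = n0 then (1:ℂ) else 0) hinj
          rw [← hP] at h1
          have h2 := (Polynomial.natDegree_lt_iff_degree_lt h0).mpr h1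
          omega
      have e1 : ∑ m ∈ c.support, c m * P.eval (v m) = c n0 := by
        rw [Finset.sum_congr rfl (fun m hm => by
          rw [Lagrange.eval_interpolate_at_node _ hinj hm, mul_ite, mul_one, mul_zero])]
        rw [Finset.sum_ite_eq' c.support n0 (fun m => c m), if_pos hn0]
      have e2 : ∑ m ∈ c.support, c m * P.eval (v m) = 0 := by
        have hev : ∀ m : ℤ, P.eval (v m) = ∑ p ∈ Finset.range (j+1), P.coeff p * (m:ℂ) ^ p :=
          fun m => Polynomial.eval_eq_sum_range' (Nat.lt_succ_of_le hdegP) _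
        rw [Finset.sum_congr rfl fun m _ => by rw [hev m, Finset.mul_sum]]
        rw [Finset.sum_comm]
        refine Finset.sum_eq_zero fun p hp => ?_
        rw [Finset.mem_range] at hp
        have : ∑ m ∈ c.support, c m * (P.coeff p * (m:ℂ) ^ p)
            = P.coeff p * ∑ m ∈ c.support, c m * (m:ℂ) ^ p := by
          rw [Finset.mul_sum]
          exact Finset.sum_congr rfl fun m _ => by ring
        rw [this, moment_zero L φ b hφ hb p x (hmom p (by omega)), mul_zero]
      rw [e1] at e2
      exact e2
    · exact Finsupp.notMem_support_iff.mp hn0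
  have := congrArg b.repr.symm hc0
  rwa [LinearEquiv.symm_apply_apply, map_zero] at this

include hφ hb in
lemma span_window (j : ℕ) : ∀ (d : ℕ) (x : W) (A : ℤ),
    (∀ p ≤ j, φ p x = 0) →
    (∀ m : ℤ, m ∉ Finset.Icc A (A + d) → b.repr x m = 0) →
    x ∈ Submodule.span ℂ (Set.range fun n : ℤ => Mo L (j+1) n) := by
  intro d
  induction d using Nat.strong_induction_on with
  | _ d IH =>
    intro x A hmom hwin
    by_cases hd : d ≤ j
    · -- small window : x = 0
      have hsub : (b.repr x).support ⊆ Finset.Icc A (A + d) := fun m hm => by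
        by_contra h
        exact (Finsupp.mem_support_iff.mp hm) (hwin m h)
      have hcard : (b.repr x).support.card ≤ j + 1 := by
        refine le_trans (Finset.card_le_card hsub) ?_
        rw [Int.card_Icc]
        omega
      rw [small_window_zero L φ b hφ hb j x hmom hcard]
      exact Submodule.zero_mem _
    · push_neg at hd
      set cA := b.repr x A with hcA
      have hmom' : ∀ p ≤ j, φ p (x - cA • Mo L (j+1) A) = 0 := by
        intro p hp
        rw [map_sub, map_smul, phi_Mo_zero L φ hφ (Nat.lt_succ_of_le hp), smul_eq_mul,
          mul_zero, hmom p hp, sub_zero]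
      have hwin' : ∀ m : ℤ, m ∉ Finset.Icc (A+1) ((A+1) + (d-1 : ℕ)) →
          b.repr (x - cA • Mo L (j+1) A) m = 0 := by
        intro m hm
        rw [Finset.mem_Icc, not_and_or] at hm
        have hd1 : ((d-1 : ℕ) : ℤ) = (d : ℤ) - 1 := by omega
        rw [map_sub, map_smul, Finsupp.coe_sub, Pi.sub_apply, Finsupp.coe_smul,
          Pi.smul_apply, smul_eq_mul]
        rcases hm with hm | hm
        · push_neg at hm
          rcases lt_or_eq_of_le (by omega : m ≤ A) with h | h
          · rw [hwin m (by rw [Finset.mem_Icc]; push_neg; intro h'; omega),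
              Mo_repr_low L b hb (j+1) A m h, mul_zero, sub_zero]
          · rw [h, ← hcA, Mo_repr_diag L b hb (j+1) A, mul_one, sub_self]
        · push_neg at hm
          rw [hd1] at hm
          have hm' : A + (d:ℤ) < m := by omega
          rw [hwin m (by rw [Finset.mem_Icc]; push_neg; intro h'; omega),
            Mo_repr_high L b hb (j+1) A m (by push_cast; omega), mul_zero, sub_zero]
      have hx' := IH (d-1) (by omega) (x - cA • Mo L (j+1) A) (A+1) hmom' hwin'
      have hMo : Mo L (j+1) A ∈ Submodule.span ℂ (Set.range fun n : ℤ => Mo L (j+1) n) :=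
        Submodule.subset_span ⟨A, rfl⟩
      have : x = (x - cA • Mo L (j+1) A) + cA • Mo L (j+1) A := by abel
      rw [this]
      exact Submodule.add_mem _ hx' (Submodule.smul_mem _ _ hMo)

end main3
end Stmt15Aux
/-- The derived subalgebra of `K_k` equals `K_{2k+1}`, where
`K_k = {x ∈ Witt : φ₀(x) = ⋯ = φ_k(x) = 0}` and `φ_j (L n) = i (i n)^j`. -/
theorem stmt15 (W : Type) [LieRing W] [LieAlgebra ℂ W] (L : ℤ → W)
    (b : Module.Basis ℤ ℂ W) (hb : ∀ n : ℤ, b n = L n)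
    (hL : ∀ m n : ℤ, ⁅L m, L n⁆ = ((m : ℂ) - n) • L (m + n))
    (φ : ℕ → (W →ₗ[ℂ] ℂ))
    (hφ : ∀ (j : ℕ) (n : ℤ), φ j (L n) = Complex.I * (Complex.I * n) ^ j)
    (k : ℕ) :
    let Kk : ℕ → Submodule ℂ W := fun j => ⨅ i ∈ Finset.range (j + 1), LinearMap.ker (φ i)
    Submodule.span ℂ {z : W | ∃ x ∈ Kk k, ∃ y ∈ Kk k, z = ⁅x, y⁆} = Kk (2 * k + 1) := by
  classical
  intro Kk
  open Stmt15Aux in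
  have hmem : ∀ (j : ℕ) (x : W), x ∈ Kk j ↔ ∀ p ≤ j, φ p x = 0 := by
    intro j x
    show x ∈ ⨅ i ∈ Finset.range (j + 1), LinearMap.ker (φ i) ↔ _
    simp [Submodule.mem_iInf, Nat.lt_succ_iff]
  apply le_antisymm
  · rw [Submodule.span_le]
    rintro z ⟨x, hx, y, hy, rfl⟩
    rw [SetLike.mem_coe, hmem]
    intro p hp
    exact Stmt15Aux.bracket_phi_zero L φ b hL hφ hb k x y
      ((hmem k x).mp hx) ((hmem k y).mp hy) p hp
  · intro x hx
    have hmomx : ∀ p ≤ 2*k+1, φ p x = 0 := (hmem (2*k+1) x).mp hx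
    -- x lies in the span of the Mo (2k+2)
    set N : ℕ := (b.repr x).support.sup (fun m => m.natAbs) with hN
    have hbound : ∀ m ∈ (b.repr x).support, m.natAbs ≤ N :=
      fun m hm => Finset.le_sup (f := fun m => m.natAbs) hm
    have h1 : x ∈ Submodule.span ℂ (Set.range fun n : ℤ => Stmt15Aux.Mo L ((2*k+1)+1) n) := by
      refine Stmt15Aux.span_window L φ b hφ hb (2*k+1) (2*N) x (-(N:ℤ)) hmomx ?_
      intro m hm
      by_contra h
      have hmem' : m ∈ (b.repr x).support := Finsupp.mem_support_iff.mpr h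
      have := hbound m hmem'
      rw [Finset.mem_Icc] at hm
      push_cast at hm
      omega
    have h2 : Set.range (fun n : ℤ => Stmt15Aux.Mo L ((2*k+1)+1) n)
        ⊆ ↑(Submodule.span ℂ {z : W | ∃ x ∈ Kk k, ∃ y ∈ Kk k, z = ⁅x, y⁆}) := by
      rintro _ ⟨n, rfl⟩
      obtain ⟨a, c, hac, hne⟩ : ∃ a c : ℤ, a + c = n ∧ a - c ≠ 0 := by
        by_cases h : n = -2
        · exact ⟨n+2, -2, by omega, by omega⟩
        · exact ⟨n+1, -1, by omega, by omega⟩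
      have hne' : (a:ℂ) - c ≠ 0 := by
        intro h
        apply hne
        have : ((a - c : ℤ) : ℂ) = 0 := by push_cast; linear_combination h
        exact_mod_cast this
      have hbr := Stmt15Aux.bracket_Mo L hL (k+1) a c
      rw [show 2*(k+1) = (2*k+1)+1 from by ring, hac] at hbr
      have heq : Stmt15Aux.Mo L ((2*k+1)+1) n = ((a:ℂ) - c)⁻¹ • ⁅Stmt15Aux.Mo L (k+1) a, Stmt15Aux.Mo L (k+1) c⁆ := by
        rw [hbr, smul_smul, inv_mul_cancel₀ hne', one_smul]
      simp only []
      rw [heq]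
      refine Submodule.smul_mem _ _ (Submodule.subset_span ?_)
      exact ⟨Stmt15Aux.Mo L (k+1) a,
        (hmem k _).mpr (fun p hp => Stmt15Aux.phi_Mo_zero L φ hφ (Nat.lt_succ_of_le hp) a),
        Stmt15Aux.Mo L (k+1) c,
        (hmem k _).mpr (fun p hp => Stmt15Aux.phi_Mo_zero L φ hφ (Nat.lt_succ_of_le hp) c),
        rfl⟩
    exact Submodule.span_le.mpr h2 h1
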